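/- Let G = Gp⟨X | r_i(u_1,…,u_k) = 1 (i ∈ I)⟩ where the words u_1,…,u_k ∈ (X ∪ X⁻¹)* are uniquely marked: each u_j contains a letter x_j (or its inverse) exactly once, and x_j occurs in no other factor. Then G is isomorphic to the free product H ∗ FG(X′), where H = Gp⟨z_1,…,z_k | r_i(z_1,…,z_k) = 1 (i ∈ I)⟩, X′ = X minus the marker letters, and the isomorphism sends z_j to u_j. In particular, H embeds in G as the subgroup generated by u_1,…,u_k. -/

import Mathlib

/-- An inverse monoid: a monoid with an involution `⁻¹` such that `x * x⁻¹ * x = x`,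
`x⁻¹ * x * x⁻¹ = x⁻¹` and all idempotents commute (these conditions are equivalent to
uniqueness of generalized inverses). -/
class InverseMonoid (M : Type*) extends Monoid M, Inv M where
  mul_inv_mul : ∀ x : M, x * x⁻¹ * x = x
  inv_mul_inv : ∀ x : M, x⁻¹ * x * x⁻¹ = x⁻¹
  idem_comm : ∀ e f : M, e * e = e → f * f = f → e * f = f * e

namespace InverseMonoid

variable {M : Type*} [InverseMonoid M]

/-- An idempotent element. -/
def IsIdem (e : M) : Prop := e * e = e

/-- The natural partial order on an inverse monoid: `x ≤ y` iff `x = y * e` for some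
idempotent `e`. -/
def le (x y : M) : Prop := ∃ e : M, IsIdem e ∧ x = y * e

/-- The compatibility relation: `m ∼ n` iff `m * n⁻¹` and `m⁻¹ * n` are idempotent. -/
def Compatible (m n : M) : Prop := IsIdem (m * n⁻¹) ∧ IsIdem (m⁻¹ * n)

/-- `z` is the meet (greatest lower bound) of `m` and `n` in the natural partial order. -/
def IsMeet (m n z : M) : Prop :=
  le z m ∧ le z n ∧ ∀ w : M, le w m → le w n → le w z

/-- An inverse monoid is E-unitary iff its compatibility relation is transitive. -/
def EUnitary (M : Type*) [InverseMonoid M] : Prop :=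
  ∀ a b c : M, Compatible a b → Compatible b c → Compatible a c

end InverseMonoid

open InverseMonoid

/-- Evaluation of a word over `X ∪ X⁻¹` in a monoid with involution. -/
def wordProd {X M : Type*} [Monoid M] [Inv M] (f : X → M) (w : List (X × Bool)) : M :=
  (w.map fun p => if p.2 then f p.1 else (f p.1)⁻¹).prod

/-- The formal inverse of a word over `X ∪ X⁻¹`. -/
def winv {X : Type*} (w : List (X × Bool)) : List (X × Bool) :=
  (w.map fun p => (p.1, !p.2)).reverse

/-- The set of relators in the free group determined by a family of relator words. -/
def presRels {X I : Type*} (rel : I → List (X × Bool)) : Set (FreeGroup X) :=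
  Set.range fun i => FreeGroup.mk (rel i)

/-- The canonical projection from the free group onto a presented group. -/
def toPres {X : Type*} (R : Set (FreeGroup X)) : FreeGroup X →* PresentedGroup R :=
  QuotientGroup.mk' (Subgroup.normalClosure R)

/-- The prefix monoid of a group presentation: the submonoid of the presented group
generated by the images of all prefixes of the relator words. -/
def prefixMonoid {X I : Type*} (rel : I → List (X × Bool)) :
    Submonoid (PresentedGroup (presRels rel)) :=
  Submonoid.closure
    {g | ∃ (i : I) (p : List (X × Bool)), p <+: rel i ∧ g = toPres (presRels rel) (FreeGroup.mk p)}

/-- The signed factor word `u_j^ε`. -/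
def sfac {X : Type*} {k : ℕ} (u : Fin k → List (X × Bool)) (q : Fin k × Bool) :
    List (X × Bool) :=
  if q.2 then u q.1 else winv (u q.1)

section auxlem

variable {X M G H : Type*} [Monoid M] [Inv M] [Group G] [Group H]

lemma wordProd_append (f : X → M) (a b : List (X × Bool)) :
    wordProd f (a ++ b) = wordProd f a * wordProd f b := by
  simp [wordProd]

lemma wordProd_cons (f : X → M) (a : X × Bool) (t : List (X × Bool)) :
    wordProd f (a :: t) = (if a.2 then f a.1 else (f a.1)⁻¹) * wordProd f t := by
  simp [wordProd]

lemma wordProd_congr {f g : X → M} {w : List (X × Bool)}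
    (h : ∀ p ∈ w, f p.1 = g p.1) : wordProd f w = wordProd g w := by
  unfold wordProd
  congr 1
  exact List.map_congr_left fun p hp => by rw [h p hp]

lemma wordProd_winv (f : X → G) (w : List (X × Bool)) :
    wordProd f (winv w) = (wordProd f w)⁻¹ := by
  unfold wordProd winv
  rw [List.map_reverse, List.prod_reverse_noncomm, List.map_map, List.map_map]
  refine congrArg Inv.inv (congrArg List.prod ?_)
  refine List.map_congr_left fun p _ => ?_
  obtain ⟨x, b⟩ := p
  cases b <;> simp

lemma map_wordProd (θ : G →* H) (f : X → G) (w : List (X × Bool)) :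
    θ (wordProd f w) = wordProd (θ ∘ f) w := by
  unfold wordProd
  rw [map_list_prod, List.map_map]
  refine congrArg List.prod ?_
  refine List.map_congr_left fun p _ => ?_
  obtain ⟨x, b⟩ := p
  cases b <;> simp

lemma wordProd_flatten (f : X → M) (ls : List (List (X × Bool))) :
    wordProd f ls.flatten = (ls.map (wordProd f)).prod := by
  induction ls with
  | nil => simp [wordProd]
  | cons a t ih => simp [wordProd_append, ih]

lemma lift_mk (f : X → G) (w : List (X × Bool)) :
    FreeGroup.lift f (FreeGroup.mk w) = wordProd f w := by
  rw [FreeGroup.lift_mk]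
  unfold wordProd
  refine congrArg List.prod ?_
  refine List.map_congr_left fun p _ => ?_
  obtain ⟨x, b⟩ := p
  cases b <;> rfl

lemma mk_eq_wordProd (w : List (X × Bool)) :
    FreeGroup.mk w = wordProd FreeGroup.of w := by
  have h1 : FreeGroup.lift (FreeGroup.of (α := X)) = MonoidHom.id _ :=
    FreeGroup.ext_hom _ _ (fun a => by simp)
  have := lift_mk (FreeGroup.of (α := X)) w
  rwa [h1] at this

lemma hom_mk (θ : FreeGroup X →* G) (w : List (X × Bool)) :
    θ (FreeGroup.mk w) = wordProd (θ ∘ FreeGroup.of) w := by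
  rw [mk_eq_wordProd, map_wordProd]

lemma count_one_split [DecidableEq X] :
    ∀ {w : List (X × Bool)} {a : X}, (w.map Prod.fst).count a = 1 →
      ∃ p b q, w = p ++ (a, b) :: q ∧ a ∉ p.map Prod.fst ∧ a ∉ q.map Prod.fst := by
  intro w
  induction w with
  | nil => intro a h; simp at h
  | cons x t ih =>
      intro a h
      by_cases hx : x.1 = a
      · refine ⟨[], x.2, t, ?_, by simp, ?_⟩
        · simp [← hx]
        · have : (t.map Prod.fst).count a = 0 := by
            simp [List.count_cons, hx] at h
            omega
          simpa [List.count_eq_zero] using this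
      · have h' : (t.map Prod.fst).count a = 1 := by
          simpa [List.count_cons, hx] using h
        obtain ⟨p, b, q, hw, hp, hq⟩ := ih h'
        exact ⟨x :: p, b, q, by simp [hw], by simpa [hp] using fun h => hx h.symm, hq⟩

lemma grp_aux1 (a z c : G) : a * (a⁻¹ * z * c⁻¹ * c) = z := by group

lemma grp_aux2 (a z c : G) : a * ((c * z⁻¹ * a)⁻¹ * c) = z := by group

end auxlem

open Monoid in
/-- If the relators of `G = Gp⟨X | r_i(u_1,…,u_k) = 1⟩` factorise over
uniquely marked words `u_1, …, u_k` (each `u_j` contains its marker letter exactly once,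
and in no other factor), then `G ≅ H ∗ FG(X′)` where
`H = Gp⟨z_1,…,z_k | r_i(z_1,…,z_k) = 1⟩` and `X′` is `X` minus the marker letters, the
isomorphism sending `u_j` to `z_j` and fixing `X′`.  In particular `H` embeds in `G` as
the subgroup generated by `u_1, …, u_k`. -/
theorem stmt15 {X I : Type*} [DecidableEq X] {k : ℕ} (rel : I → List (X × Bool))
    (u : Fin k → List (X × Bool)) (seqs : I → List (Fin k × Bool))
    (hfac : ∀ i, rel i = ((seqs i).map (sfac u)).flatten)
    (marker : Fin k → X) (hinj : Function.Injective marker)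
    (hmark : ∀ j : Fin k, ((u j).map Prod.fst).count (marker j) = 1)
    (hsep : ∀ j l : Fin k, j ≠ l → marker j ∉ (u l).map Prod.fst) :
    (∃ e : PresentedGroup (presRels rel) ≃*
        Coprod (PresentedGroup (Set.range fun i => FreeGroup.mk (seqs i)))
          (FreeGroup {x : X // x ∉ Set.range marker}),
      (∀ j : Fin k, e (toPres (presRels rel) (FreeGroup.mk (u j))) =
        Coprod.inl (toPres (Set.range fun i => FreeGroup.mk (seqs i)) (FreeGroup.of j))) ∧
      (∀ x : {x : X // x ∉ Set.range marker}, e (toPres (presRels rel) (FreeGroup.of x.1)) =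
        Coprod.inr (FreeGroup.of x))) ∧
    (∃ ψ : PresentedGroup (Set.range fun i => FreeGroup.mk (seqs i)) →*
        PresentedGroup (presRels rel),
      Function.Injective ψ ∧
      (∀ j : Fin k, ψ (toPres (Set.range fun i => FreeGroup.mk (seqs i)) (FreeGroup.of j)) =
        toPres (presRels rel) (FreeGroup.mk (u j))) ∧
      ψ.range = Subgroup.closure
        (Set.range fun j : Fin k => toPres (presRels rel) (FreeGroup.mk (u j)))) := by
  classical
  choose p b q hu hp hq using fun j => count_one_split (hmark j)
  -- letters of p j and q j are not markers
  have humem : ∀ j, (u j).map Prod.fst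
      = (p j).map Prod.fst ++ marker j :: (q j).map Prod.fst := by
    intro j; rw [hu j]; simp
  have hpm : ∀ j, ∀ y ∈ (p j).map Prod.fst, y ∉ Set.range marker := by
    rintro j y hy ⟨l, rfl⟩
    rcases eq_or_ne l j with rfl | hne
    · exact hp _ hy
    · exact hsep _ _ hne (by rw [humem _]; exact List.mem_append_left _ hy)
  have hqm : ∀ j, ∀ y ∈ (q j).map Prod.fst, y ∉ Set.range marker := by
    rintro j y hy ⟨l, rfl⟩
    rcases eq_or_ne l j with rfl | hne
    · exact hq _ hy
    · refine hsep _ _ hne ?_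
      rw [humem _]
      exact List.mem_append_right _ (List.mem_cons_of_mem _ hy)
  set X' := {x : X // x ∉ Set.range marker} with hX'
  set R' : Set (FreeGroup (Fin k)) := Set.range fun i => FreeGroup.mk (seqs i) with hR'
  set K := Coprod (PresentedGroup R') (FreeGroup X') with hK
  set g0 : X → K := fun x =>
    if h : x ∈ Set.range marker then 1 else Coprod.inr (FreeGroup.of (⟨x, h⟩ : X')) with hg0
  set zl : Fin k → K := fun j => Coprod.inl (toPres R' (FreeGroup.of j)) with hzl
  set f : X → K := fun x =>
    if h : x ∈ Set.range marker then
      (if b h.choose then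
        (wordProd g0 (p h.choose))⁻¹ * zl h.choose * (wordProd g0 (q h.choose))⁻¹
       else wordProd g0 (q h.choose) * (zl h.choose)⁻¹ * wordProd g0 (p h.choose))
    else Coprod.inr (FreeGroup.of (⟨x, h⟩ : X')) with hf
  have hchoose : ∀ (j : Fin k) (h : marker j ∈ Set.range marker), h.choose = j :=
    fun j h => hinj h.choose_spec
  have hf_marker : ∀ j : Fin k, f (marker j) =
      (if b j then (wordProd g0 (p j))⁻¹ * zl j * (wordProd g0 (q j))⁻¹
       else wordProd g0 (q j) * (zl j)⁻¹ * wordProd g0 (p j)) := by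
    intro j
    have hmem : marker j ∈ Set.range marker := ⟨j, rfl⟩
    rw [hf]
    simp only [dif_pos hmem, hchoose j hmem]
  have hf_non : ∀ (x : X) (h : x ∉ Set.range marker),
      f x = Coprod.inr (FreeGroup.of (⟨x, h⟩ : X')) := by
    intro x h; rw [hf]; simp only [dif_neg h]
  have hg0_non : ∀ (x : X) (h : x ∉ Set.range marker),
      g0 x = Coprod.inr (FreeGroup.of (⟨x, h⟩ : X')) := by
    intro x h; rw [hg0]; simp only [dif_neg h]
  have hfg0 : ∀ (x : X), x ∉ Set.range marker → f x = g0 x := by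
    intro x h; rw [hf_non x h, hg0_non x h]
  -- the key computation
  have hfu : ∀ j : Fin k, wordProd f (u j) = zl j := by
    intro j
    have hP : wordProd f (p j) = wordProd g0 (p j) :=
      wordProd_congr fun pr hpr => hfg0 _ (hpm j pr.1 (List.mem_map_of_mem (f := Prod.fst) hpr))
    have hQ : wordProd f (q j) = wordProd g0 (q j) :=
      wordProd_congr fun pr hpr => hfg0 _ (hqm j pr.1 (List.mem_map_of_mem (f := Prod.fst) hpr))
    rw [hu j, wordProd_append, wordProd_cons, hP, hQ, hf_marker j]
    cases hb : b j <;> simp [hb]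
    · exact grp_aux2 (G := K) _ _ _
    · exact grp_aux1 (G := K) _ _ _
  -- G → K
  have hrelG : ∀ r ∈ presRels rel, FreeGroup.lift f r = 1 := by
    rintro r ⟨i, rfl⟩
    rw [lift_mk, hfac i, wordProd_flatten, List.map_map]
    have heq : (seqs i).map (wordProd f ∘ sfac u)
        = (seqs i).map (fun s => if s.2 then zl s.1 else (zl s.1)⁻¹) := by
      refine List.map_congr_left fun s _ => ?_
      obtain ⟨j, bb⟩ := s
      cases bb
      · show wordProd f (sfac u (j, false)) = (zl j)⁻¹
        rw [show sfac u (j, false) = winv (u j) from rfl, wordProd_winv, hfu j]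
      · show wordProd f (sfac u (j, true)) = zl j
        rw [show sfac u (j, true) = u j from rfl, hfu j]
    rw [heq]
    have h1 : toPres R' (FreeGroup.mk (seqs i)) = 1 :=
      (QuotientGroup.eq_one_iff _).mpr (Subgroup.subset_normalClosure ⟨i, rfl⟩)
    have h2 : ((seqs i).map (fun s => if s.2 then zl s.1 else (zl s.1)⁻¹)).prod
        = wordProd zl (seqs i) := rfl
    have h3 : wordProd zl (seqs i)
        = Coprod.inl (wordProd (fun j => toPres R' (FreeGroup.of j)) (seqs i)) :=
      (map_wordProd _ _ _).symm
    have h4 : wordProd (fun j => toPres R' (FreeGroup.of j)) (seqs i)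
        = toPres R' (FreeGroup.mk (seqs i)) := (hom_mk _ _).symm
    rw [h2, h3, h4, h1, map_one]
  let φ : PresentedGroup (presRels rel) →* K := PresentedGroup.toGroup hrelG
  have hφ : ∀ g : FreeGroup X, φ (toPres (presRels rel) g) = FreeGroup.lift f g := fun g => rfl
  -- H → G
  set t : Fin k → PresentedGroup (presRels rel) :=
    fun j => toPres (presRels rel) (FreeGroup.mk (u j)) with ht
  have hrelH : ∀ r ∈ R', FreeGroup.lift t r = 1 := by
    rintro r ⟨i, rfl⟩
    rw [lift_mk]
    have key : wordProd t (seqs i) = toPres (presRels rel) (FreeGroup.mk (rel i)) := by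
      have h0 : toPres (presRels rel) (FreeGroup.mk (rel i))
          = ((seqs i).map (wordProd (⇑(toPres (presRels rel)) ∘ FreeGroup.of) ∘ sfac u)).prod := by
        rw [hom_mk, hfac i, wordProd_flatten, List.map_map]
      rw [h0]
      show ((seqs i).map fun s => if s.2 then t s.1 else (t s.1)⁻¹).prod = _
      refine congrArg List.prod (List.map_congr_left fun s _ => ?_)
      obtain ⟨j, bb⟩ := s
      cases bb
      · show (t j)⁻¹ = (wordProd (⇑(toPres (presRels rel)) ∘ FreeGroup.of) ∘ sfac u) (j, false)
        show (t j)⁻¹ = wordProd (⇑(toPres (presRels rel)) ∘ FreeGroup.of) (winv (u j))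
        rw [wordProd_winv]
        exact congrArg Inv.inv (hom_mk _ _)
      · show t j = (wordProd (⇑(toPres (presRels rel)) ∘ FreeGroup.of) ∘ sfac u) (j, true)
        exact hom_mk _ _
    rw [key]
    exact (QuotientGroup.eq_one_iff _).mpr (Subgroup.subset_normalClosure ⟨i, rfl⟩)
  let ψ : PresentedGroup R' →* PresentedGroup (presRels rel) := PresentedGroup.toGroup hrelH
  let ρ : FreeGroup X' →* PresentedGroup (presRels rel) :=
    FreeGroup.lift (fun x : X' => toPres (presRels rel) (FreeGroup.of x.1))
  let θ : K →* PresentedGroup (presRels rel) := Coprod.lift ψ ρ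
  have hθg0 : ∀ (x : X), x ∉ Set.range marker →
      θ (g0 x) = toPres (presRels rel) (FreeGroup.of x) := by
    intro x h
    rw [hg0_non x h]
    have h2 : θ (Coprod.inr (FreeGroup.of (⟨x, h⟩ : X'))) = ρ (FreeGroup.of (⟨x, h⟩ : X')) :=
      Coprod.lift_apply_inr ψ ρ _
    rw [h2]
    exact FreeGroup.lift_apply_of
  have hθword : ∀ w : List (X × Bool), (∀ y ∈ w.map Prod.fst, y ∉ Set.range marker) →
      θ (wordProd g0 w) = toPres (presRels rel) (FreeGroup.mk w) := by
    intro w hw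
    rw [map_wordProd, hom_mk]
    exact wordProd_congr fun pr hpr => hθg0 pr.1 (hw _ (List.mem_map_of_mem (f := Prod.fst) hpr))
  have hθzl : ∀ j : Fin k, θ (zl j) = toPres (presRels rel) (FreeGroup.mk (u j)) := by
    intro j
    rw [hzl]
    show ψ (toPres R' (FreeGroup.of j)) = _
    exact PresentedGroup.toGroup.of hrelH
  -- roundtrip 1 : φ ∘ θ = id
  have hrt1 : φ.comp θ = MonoidHom.id K := by
    refine Coprod.hom_ext ?_ ?_
    · refine PresentedGroup.ext fun j => ?_
      show φ (θ (Coprod.inl (PresentedGroup.of j))) = Coprod.inl (PresentedGroup.of j)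
      have h1 : θ (Coprod.inl (PresentedGroup.of j)) = toPres (presRels rel) (FreeGroup.mk (u j)) := by
        rw [Coprod.lift_apply_inl]
        exact PresentedGroup.toGroup.of hrelH
      rw [h1, hφ, lift_mk, hfu j]
      rfl
    · refine FreeGroup.ext_hom _ _ fun x => ?_
      show φ (θ (Coprod.inr (FreeGroup.of x))) = Coprod.inr (FreeGroup.of x)
      have h1 : θ (Coprod.inr (FreeGroup.of x)) = toPres (presRels rel) (FreeGroup.of x.1) := by
        rw [Coprod.lift_apply_inr]
        exact FreeGroup.lift_apply_of
      rw [h1, hφ, FreeGroup.lift_apply_of, hf_non x.1 x.2]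
  -- roundtrip 2 : θ ∘ φ = id
  have hrt2 : θ.comp φ = MonoidHom.id _ := by
    refine PresentedGroup.ext fun x => ?_
    show θ (φ (toPres (presRels rel) (FreeGroup.of x))) = PresentedGroup.of x
    rw [hφ, FreeGroup.lift_apply_of]
    by_cases h : x ∈ Set.range marker
    · obtain ⟨j, rfl⟩ := h
      rw [hf_marker j]
      have hPj : θ (wordProd g0 (p j)) = toPres (presRels rel) (FreeGroup.mk (p j)) :=
        hθword _ (hpm j)
      have hQj : θ (wordProd g0 (q j)) = toPres (presRels rel) (FreeGroup.mk (q j)) :=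
        hθword _ (hqm j)
      cases hb : b j
      · rw [if_neg Bool.false_ne_true]
        simp only [map_mul, map_inv]
        rw [show θ (zl j)⁻¹ = (θ (zl j))⁻¹ from map_inv θ (zl j)]
        rw [hPj, hQj, hθzl j]
        have hT : toPres (presRels rel) (FreeGroup.mk (u j))
            = toPres (presRels rel) (FreeGroup.mk (p j)) *
              (toPres (presRels rel) (FreeGroup.of (marker j)))⁻¹ *
              toPres (presRels rel) (FreeGroup.mk (q j)) := by
          rw [hu j, hb, show ((marker j, false) :: q j) = [(marker j, false)] ++ q j from rfl,
            ← FreeGroup.mul_mk, ← FreeGroup.mul_mk, map_mul, map_mul,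
            show FreeGroup.mk [(marker j, false)] = (FreeGroup.of (marker j))⁻¹ from rfl,
            map_inv, mul_assoc]
        show _ = toPres (presRels rel) (FreeGroup.of (marker j))
        rw [hT]
        group
      · rw [if_pos rfl]
        simp only [map_mul, map_inv]
        rw [show θ (wordProd g0 (p j))⁻¹ = (θ (wordProd g0 (p j)))⁻¹ from map_inv θ _,
          show θ (wordProd g0 (q j))⁻¹ = (θ (wordProd g0 (q j)))⁻¹ from map_inv θ _]
        rw [hPj, hQj, hθzl j]
        have hT : toPres (presRels rel) (FreeGroup.mk (u j))
            = toPres (presRels rel) (FreeGroup.mk (p j)) *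
              toPres (presRels rel) (FreeGroup.of (marker j)) *
              toPres (presRels rel) (FreeGroup.mk (q j)) := by
          rw [hu j, hb, show ((marker j, true) :: q j) = [(marker j, true)] ++ q j from rfl,
            ← FreeGroup.mul_mk, ← FreeGroup.mul_mk, map_mul, map_mul,
            show FreeGroup.mk [(marker j, true)] = FreeGroup.of (marker j) from rfl,
            mul_assoc]
        show _ = toPres (presRels rel) (FreeGroup.of (marker j))
        rw [hT]
        group
    · rw [hf_non x h]
      have h2 : θ (Coprod.inr (FreeGroup.of (⟨x, h⟩ : X'))) = ρ (FreeGroup.of (⟨x, h⟩ : X')) :=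
        Coprod.lift_apply_inr ψ ρ _
      rw [h2]
      exact FreeGroup.lift_apply_of
  let e : PresentedGroup (presRels rel) ≃* K := MonoidHom.toMulEquiv φ θ hrt2 hrt1
  have he : ∀ g, e g = φ g := fun g => rfl
  have hψof : ∀ j : Fin k, ψ (toPres R' (FreeGroup.of j)) = toPres (presRels rel) (FreeGroup.mk (u j)) :=
    fun j => PresentedGroup.toGroup.of hrelH
  constructor
  · refine ⟨e, fun j => ?_, fun x => ?_⟩
    · rw [he, hφ, lift_mk, hfu j]
    · rw [he, hφ, FreeGroup.lift_apply_of, hf_non x.1 x.2]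
  · refine ⟨ψ, ?_, hψof, ?_⟩
    · have hθinj : Function.Injective θ :=
        Function.LeftInverse.injective (g := φ) (fun y => DFunLike.congr_fun hrt1 y)
      have : ∀ x, ψ x = θ (Coprod.inl x) := fun x => (Coprod.lift_apply_inl ψ ρ x).symm
      intro a b' hab
      exact Coprod.inl_injective (hθinj (by rw [← this, ← this, hab]))
    · rw [MonoidHom.range_eq_map, ← PresentedGroup.closure_range_of R',
        MonoidHom.map_closure]
      congr 1
      rw [← Set.range_comp]
      refine congrArg Set.range (funext fun j => ?_)
      exact hψof j
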